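/- If ℬ is a chordal building set on a finite set S, then the edge labeling μ_ℬ on the Hasse diagram of P̂_ℬ is reversed edge lexicographical: in each interval [x,y] of P̂_ℬ there is a unique maximal chain c with decreasing label sequence, and μ_ℬ(c) lexicographically succeeds μ_ℬ(c') for every other maximal chain c' of [x,y]. Consequently P̂_ℬ is EL-shellable. -/

import Mathlib

/-- The restriction of a collection of finsets to subsets of `I`. -/
def BS.restrict (B : Finset (Finset ℕ)) (I : Finset ℕ) : Finset (Finset ℕ) :=
  B.filter (· ⊆ I)

/-- `B` is a building set on `S`. -/
def BS.IsBuilding (S : Finset ℕ) (B : Finset (Finset ℕ)) : Prop :=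
  (∀ J ∈ B, J ⊆ S ∧ J.Nonempty) ∧
  (∀ i ∈ S, ({i} : Finset ℕ) ∈ B) ∧
  (∀ I ∈ B, ∀ J ∈ B, (I ∩ J).Nonempty → I ∪ J ∈ B)

/-- `B` is chordal: every "suffix" `{x ∈ I : a ≤ x}` of an element `I` is in `B`. -/
def BS.IsChordal (B : Finset (Finset ℕ)) : Prop :=
  ∀ I ∈ B, ∀ a ∈ I, I.filter (fun x => a ≤ x) ∈ B

/-- A connected component of `B`: an inclusion-maximal element. -/
def BS.IsComponent (B : Finset (Finset ℕ)) (C : Finset ℕ) : Prop :=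
  C ∈ B ∧ ∀ J ∈ B, C ⊆ J → J = C

/-- The restriction of `B` to `I` has no connected component of odd cardinality. -/
def BS.NoOddComp (B : Finset (Finset ℕ)) (I : Finset ℕ) : Prop :=
  ∀ C ∈ BS.restrict B I, BS.IsComponent (BS.restrict B I) C → Even C.card

/-- The poset `P̂_B` of subsets of `S` whose restriction has no odd component. -/
def BS.hatP (B : Finset (Finset ℕ)) (S : Finset ℕ) : Set (Finset ℕ) :=
  {I | I ⊆ S ∧ BS.NoOddComp B I}

/-- `L` is a (one-line notation) permutation of the finite set `S`. -/
def BS.IsPermOf (S : Finset ℕ) (L : List ℕ) : Prop :=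
  L.Nodup ∧ L.toFinset = S

/-- `L` is a `B`-permutation: each entry lies in the same connected component of the
restriction of `B` to the prefix as the maximum of the prefix. -/
def BS.IsBPerm (B : Finset (Finset ℕ)) (S : Finset ℕ) (L : List ℕ) : Prop :=
  BS.IsPermOf S L ∧
  ∀ i, i < L.length →
    ∃ C : Finset ℕ, BS.IsComponent (BS.restrict B (L.take (i + 1)).toFinset) C ∧
      L.getD i 0 ∈ C ∧ ∃ M ∈ C, ∀ y ∈ (L.take (i + 1)).toFinset, y ≤ M

/-- `L` is alternating: `x₁ > x₂ < x₃ > x₄ < ⋯`. -/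
def BS.IsAlternating (L : List ℕ) : Prop :=
  ∀ i, i + 1 < L.length →
    (i % 2 = 0 → L.getD (i + 1) 0 < L.getD i 0) ∧
    (i % 2 = 1 → L.getD i 0 < L.getD (i + 1) 0)

/-- The maximum of a finset of naturals, as an integer (`0` for `∅`). -/
def BS.fmax (s : Finset ℕ) : ℤ := ((WithBot.unbotD 0 s.max : ℕ) : ℤ)

/-- The minimum of a finset of naturals, as an integer (`0` for `∅`). -/
def BS.fmin (s : Finset ℕ) : ℤ := ((WithTop.untopD 0 s.min : ℕ) : ℤ)

open Classical in
/-- The connected component `𝔠(I₂;I₁)` of `B|_{I₂}` containing `I₂ \ I₁`. -/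
noncomputable def BS.comp (B : Finset (Finset ℕ)) (I₁ I₂ : Finset ℕ) : Finset ℕ :=
  (BS.restrict B I₂).sup
    (fun C => if BS.IsComponent (BS.restrict B I₂) C ∧ I₂ \ I₁ ⊆ C then C else ∅)

/-- The edge label `μ_B(I₁,I₂) = (max 𝔠(I₂;I₁), (max I₂\I₁, min I₂\I₁))`. -/
noncomputable def BS.mu (B : Finset (Finset ℕ)) (I₁ I₂ : Finset ℕ) : ℤ × ℤ × ℤ :=
  (BS.fmax (BS.comp B I₁ I₂), BS.fmax (I₂ \ I₁), BS.fmin (I₂ \ I₁))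

/-- The partial order `≥` on `Ω = ℤ × ℤ` generated by the relations `ℛ₁` and `ℛ₂`. -/
def BS.omGe (a b : ℤ × ℤ) : Prop :=
  (a.1 ≥ a.2 ∧ a.2 ≥ b.1 ∧ b.1 ≥ b.2) ∨ (a.1 = b.1 ∧ b.1 ≥ a.2 ∧ a.2 ≥ b.2)

/-- The lexicographic order `⪰` on `ℤ × Ω`. -/
def BS.labGe (a b : ℤ × ℤ × ℤ) : Prop := a.1 > b.1 ∨ (a.1 = b.1 ∧ BS.omGe a.2 b.2)

/-- Strict version `≻` of the lexicographic order on labels. -/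
def BS.labGt (a b : ℤ × ℤ × ℤ) : Prop := BS.labGe a b ∧ a ≠ b

/-- `I₂` covers `I₁` in the poset `P̂_B`. -/
def BS.Covers (B : Finset (Finset ℕ)) (S : Finset ℕ) (I₁ I₂ : Finset ℕ) : Prop :=
  I₁ ∈ BS.hatP B S ∧ I₂ ∈ BS.hatP B S ∧ I₁ ⊂ I₂ ∧
    ∀ J ∈ BS.hatP B S, I₁ ⊂ J → ¬ J ⊂ I₂

/-- `c` is a maximal chain of `P̂_B` (a saturated chain from `∅` to `S`). -/
def BS.IsMaxChain (B : Finset (Finset ℕ)) (S : Finset ℕ) (c : List (Finset ℕ)) : Prop :=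
  c.Chain' (BS.Covers B S) ∧ c.head? = some ∅ ∧ c.getLast? = some S

/-- The label sequence of `c` has a decreasing position at (zero-based) index `i`. -/
noncomputable def BS.DecAt (B : Finset (Finset ℕ)) (c : List (Finset ℕ)) (i : ℕ) : Prop :=
  i + 2 < c.length ∧
    BS.labGt (BS.mu B (c.getD i ∅) (c.getD (i + 1) ∅))
      (BS.mu B (c.getD (i + 1) ∅) (c.getD (i + 2) ∅))

/-- `c` is a maximal (saturated) chain of the interval `[x,y]` in `P̂_B`. -/
def BS.IsMaxChainOn (B : Finset (Finset ℕ)) (S : Finset ℕ) (x y : Finset ℕ)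
    (c : List (Finset ℕ)) : Prop :=
  c.Chain' (BS.Covers B S) ∧ c.head? = some x ∧ c.getLast? = some y

/-- The label sequence `μ_B(c)` is (weakly) decreasing. -/
noncomputable def BS.IsDecSeq (B : Finset (Finset ℕ)) (c : List (Finset ℕ)) : Prop :=
  ∀ i, i + 2 < c.length →
    BS.labGe (BS.mu B (c.getD i ∅) (c.getD (i + 1) ∅))
      (BS.mu B (c.getD (i + 1) ∅) (c.getD (i + 2) ∅))

/-- `μ_B(c)` lexicographically succeeds `μ_B(c')`. -/
noncomputable def BS.LexSucc (B : Finset (Finset ℕ)) (c c' : List (Finset ℕ)) : Prop :=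
  ∃ i, i + 1 < c.length ∧
    (∀ j < i, BS.mu B (c.getD j ∅) (c.getD (j + 1) ∅)
      = BS.mu B (c'.getD j ∅) (c'.getD (j + 1) ∅)) ∧
    BS.labGt (BS.mu B (c.getD i ∅) (c.getD (i + 1) ∅))
      (BS.mu B (c'.getD i ∅) (c'.getD (i + 1) ∅))

namespace BS

lemma mem_restrict {B : Finset (Finset ℕ)} {D I : Finset ℕ} :
    D ∈ restrict B I ↔ D ∈ B ∧ D ⊆ I := by
  simp [restrict]

lemma restrict_mono {B : Finset (Finset ℕ)} {I J : Finset ℕ} (h : I ⊆ J) :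
    restrict B I ⊆ restrict B J := by
  intro D hD; rw [mem_restrict] at *; exact ⟨hD.1, hD.2.trans h⟩

lemma exists_comp {B : Finset (Finset ℕ)} {I D : Finset ℕ} (hD : D ∈ restrict B I) :
    ∃ C, IsComponent (restrict B I) C ∧ D ⊆ C := by
  classical
  obtain ⟨C, hC, hmax⟩ := Finset.exists_max_image
    ((restrict B I).filter (fun C => D ⊆ C)) Finset.card
    ⟨D, by simp [hD]⟩
  simp only [Finset.mem_filter] at hC
  refine ⟨C, ⟨hC.1, ?_⟩, hC.2⟩
  intro J hJ hCJ
  have hJf : J ∈ (restrict B I).filter (fun C => D ⊆ C) := by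
    simp [hJ, hC.2.trans hCJ]
  exact (Finset.eq_of_subset_of_card_le hCJ (hmax J hJf)).symm

lemma comp_mem {B : Finset (Finset ℕ)} {I C : Finset ℕ}
    (hC : IsComponent (restrict B I) C) : C ∈ B ∧ C ⊆ I :=
  mem_restrict.mp hC.1

/-- two components that meet are equal -/
lemma comp_eq_of_meet {S : Finset ℕ} {B : Finset (Finset ℕ)} (hB : IsBuilding S B)
    {I C C' : Finset ℕ} (hC : IsComponent (restrict B I) C)
    (hC' : IsComponent (restrict B I) C') (h : (C ∩ C').Nonempty) : C = C' := by
  have h1 := mem_restrict.mp hC.1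
  have h2 := mem_restrict.mp hC'.1
  have hu : C ∪ C' ∈ restrict B I := by
    rw [mem_restrict]
    exact ⟨hB.2.2 C h1.1 C' h2.1 h, Finset.union_subset h1.2 h2.2⟩
  have e1 : C ∪ C' = C := hC.2 _ hu Finset.subset_union_left
  have e2 : C ∪ C' = C' := hC'.2 _ hu Finset.subset_union_right
  rw [← e1, e2]

/-- a member of the restriction meeting a component lies inside it -/
lemma subset_comp {S : Finset ℕ} {B : Finset (Finset ℕ)} (hB : IsBuilding S B)
    {I C D : Finset ℕ} (hC : IsComponent (restrict B I) C)
    (hD : D ∈ restrict B I) (h : (D ∩ C).Nonempty) : D ⊆ C := by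
  have h1 := mem_restrict.mp hC.1
  have h2 := mem_restrict.mp hD
  have hu : D ∪ C ∈ restrict B I := by
    rw [mem_restrict]
    exact ⟨hB.2.2 D h2.1 C h1.1 h, Finset.union_subset h2.2 h1.2⟩
  have := hC.2 _ hu Finset.subset_union_right
  rw [← this]; exact Finset.subset_union_left

lemma mem_exists_comp {S : Finset ℕ} {B : Finset (Finset ℕ)} (hB : IsBuilding S B)
    {I : Finset ℕ} (hI : I ⊆ S) {i : ℕ} (hi : i ∈ I) :
    ∃ C, IsComponent (restrict B I) C ∧ i ∈ C := by
  have : ({i} : Finset ℕ) ∈ restrict B I := by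
    rw [mem_restrict]
    exact ⟨hB.2.1 i (hI hi), Finset.singleton_subset_iff.mpr hi⟩
  obtain ⟨C, hC, hsub⟩ := exists_comp this
  exact ⟨C, hC, hsub (Finset.mem_singleton_self i)⟩

end BS
namespace BS

open Classical in
/-- The finset of components of `restrict B I`. -/
noncomputable def comps (B : Finset (Finset ℕ)) (I : Finset ℕ) : Finset (Finset ℕ) :=
  (restrict B I).filter (fun C => IsComponent (restrict B I) C)

lemma mem_comps {B : Finset (Finset ℕ)} {I C : Finset ℕ} :
    C ∈ comps B I ↔ IsComponent (restrict B I) C := by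
  classical
  simp only [comps, Finset.mem_filter]
  exact ⟨fun h => h.2, fun h => ⟨h.1, h⟩⟩

lemma card_biUnion_comps {S : Finset ℕ} {B : Finset (Finset ℕ)} (hB : IsBuilding S B)
    {I : Finset ℕ} (K : Finset (Finset ℕ)) (hK : K ⊆ comps B I) :
    (K.biUnion id).card = ∑ C ∈ K, C.card := by
  classical
  apply Finset.card_biUnion
  intro C hC C' hC' hne
  show Disjoint C C'; rw [Finset.disjoint_left]
  intro a ha ha'
  exact hne (comp_eq_of_meet hB (mem_comps.mp (hK hC)) (mem_comps.mp (hK hC'))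
    ⟨a, Finset.mem_inter.mpr ⟨ha, ha'⟩⟩)

lemma even_union_comps {S : Finset ℕ} {B : Finset (Finset ℕ)} (hB : IsBuilding S B)
    {I : Finset ℕ} (hno : NoOddComp B I) (K : Finset (Finset ℕ)) (hK : K ⊆ comps B I) :
    Even (K.biUnion id).card := by
  rw [card_biUnion_comps hB K hK]
  rw [even_iff_two_dvd]
  apply Finset.dvd_sum
  intro C hC
  rw [← even_iff_two_dvd]
  exact hno C (mem_comps.mp (hK hC)).1 (mem_comps.mp (hK hC))

/-- I ∈ hatP has even cardinality -/
lemma even_card_of_hatP {S : Finset ℕ} {B : Finset (Finset ℕ)} (hB : IsBuilding S B)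
    {I : Finset ℕ} (hI : I ∈ hatP B S) : Even I.card := by
  classical
  have : I = (comps B I).biUnion id := by
    apply Finset.Subset.antisymm
    · intro i hi
      obtain ⟨C, hC, hiC⟩ := mem_exists_comp hB hI.1 hi
      exact Finset.mem_biUnion.mpr ⟨C, mem_comps.mpr hC, hiC⟩
    · intro i hi
      obtain ⟨C, hC, hiC⟩ := Finset.mem_biUnion.mp hi
      exact (comp_mem (mem_comps.mp hC)).2 hiC
  rw [this]
  exact even_union_comps hB hI.2 _ (le_refl _)

/-- the part of `x` inside a set `K` that swallows all `x`-components it meets is even -/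
lemma even_inter {S : Finset ℕ} {B : Finset (Finset ℕ)} (hB : IsBuilding S B)
    {x : Finset ℕ} (hx : x ∈ hatP B S) (K : Finset ℕ)
    (h : ∀ i ∈ x ∩ K, ∃ L, IsComponent (restrict B x) L ∧ i ∈ L ∧ L ⊆ K) :
    Even (x ∩ K).card := by
  classical
  have : x ∩ K = ((comps B x).filter (fun C => C ⊆ K)).biUnion id := by
    apply Finset.Subset.antisymm
    · intro i hi
      obtain ⟨L, hL, hiL, hLK⟩ := h i hi
      exact Finset.mem_biUnion.mpr ⟨L, Finset.mem_filter.mpr ⟨mem_comps.mpr hL, hLK⟩, hiL⟩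
    · intro i hi
      obtain ⟨C, hC, hiC⟩ := Finset.mem_biUnion.mp hi
      rw [Finset.mem_filter] at hC
      exact Finset.mem_inter.mpr ⟨(comp_mem (mem_comps.mp hC.1)).2 hiC, hC.2 hiC⟩
  rw [this]
  exact even_union_comps hB hx.2 _ (Finset.filter_subset _ _)

end BS
namespace BS

lemma fmax_nonneg (s : Finset ℕ) : 0 ≤ fmax s := Int.ofNat_nonneg _

lemma fmax_spec {s : Finset ℕ} (hs : s.Nonempty) :
    ∃ m ∈ s, fmax s = (m : ℤ) ∧ ∀ i ∈ s, i ≤ m := by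
  obtain ⟨m, hm⟩ := Finset.max_of_nonempty hs
  refine ⟨m, Finset.mem_of_max hm, ?_, fun i hi => ?_⟩
  · simp [fmax, hm]
  · exact Finset.le_max_of_eq hi hm

lemma fmin_spec {s : Finset ℕ} (hs : s.Nonempty) :
    ∃ m ∈ s, fmin s = (m : ℤ) ∧ ∀ i ∈ s, m ≤ i := by
  obtain ⟨m, hm⟩ := Finset.min_of_nonempty hs
  refine ⟨m, Finset.mem_of_min hm, ?_, fun i hi => ?_⟩
  · simp only [fmin, hm]; rfl
  · exact Finset.min_le_of_eq hi hm

lemma le_fmax {s : Finset ℕ} {i : ℕ} (hi : i ∈ s) : (i : ℤ) ≤ fmax s := by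
  obtain ⟨m, _, hm, hle⟩ := fmax_spec ⟨i, hi⟩
  rw [hm]; exact_mod_cast hle i hi

lemma fmax_mono {s t : Finset ℕ} (h : s ⊆ t) : fmax s ≤ fmax t := by
  rcases s.eq_empty_or_nonempty with rfl | hs
  · simpa [fmax] using fmax_nonneg t
  · obtain ⟨m, hm, he, _⟩ := fmax_spec hs
    rw [he]; exact le_fmax (h hm)

lemma fmax_pair {a b : ℕ} (h : b < a) : fmax ({a, b} : Finset ℕ) = (a : ℤ) := by
  obtain ⟨m, hm, he, hle⟩ := fmax_spec (s := {a,b}) ⟨a, by simp⟩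
  have h1 := hle a (by simp)
  rw [he]
  simp only [Finset.mem_insert, Finset.mem_singleton] at hm
  rcases hm with rfl | rfl
  · rfl
  · omega

lemma fmin_pair {a b : ℕ} (h : b < a) : fmin ({a, b} : Finset ℕ) = (b : ℤ) := by
  obtain ⟨m, hm, he, hle⟩ := fmin_spec (s := {a,b}) ⟨a, by simp⟩
  have h1 := hle b (by simp)
  rw [he]
  simp only [Finset.mem_insert, Finset.mem_singleton] at hm
  rcases hm with rfl | rfl
  · omega
  · rfl

lemma comp_val {S : Finset ℕ} {B : Finset (Finset ℕ)} (hB : IsBuilding S B)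
    {x z K : Finset ℕ} (hne : (z \ x).Nonempty)
    (hK : IsComponent (restrict B z) K) (hd : z \ x ⊆ K) : comp B x z = K := by
  classical
  apply le_antisymm
  · apply Finset.sup_le
    intro C hC
    split_ifs with h
    · exact le_of_eq (comp_eq_of_meet hB h.1 hK
        (hne.mono (Finset.subset_inter h.2 hd)))
    · exact Finset.empty_subset K
  · refine le_trans ?_ (Finset.le_sup (f := fun C =>
      if IsComponent (restrict B z) C ∧ z \ x ⊆ C then C else ∅) hK.1)
    show K ≤ if IsComponent (restrict B z) K ∧ z \ x ⊆ K then K else ∅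
    rw [if_pos ⟨hK, hd⟩]

lemma even_inter_comp {S : Finset ℕ} {B : Finset (Finset ℕ)} (hB : IsBuilding S B)
    {x z K : Finset ℕ} (hx : x ∈ hatP B S) (hxz : x ⊆ z) (hzS : z ⊆ S)
    (hK : IsComponent (restrict B z) K) : Even (x ∩ K).card := by
  apply even_inter hB hx K
  intro i hi
  rw [Finset.mem_inter] at hi
  obtain ⟨L, hL, hiL⟩ := mem_exists_comp hB hx.1 hi.1
  refine ⟨L, hL, hiL, subset_comp hB hK ?_ ⟨i, Finset.mem_inter.mpr ⟨hiL, hi.2⟩⟩⟩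
  rw [mem_restrict]
  exact ⟨(comp_mem hL).1, (comp_mem hL).2.trans hxz⟩

lemma hatP_insert_pair {S : Finset ℕ} {B : Finset (Finset ℕ)} (hB : IsBuilding S B)
    {x : Finset ℕ} (hx : x ∈ hatP B S) {a b : ℕ} (ha : a ∈ S) (hb : b ∈ S)
    (hax : a ∉ x) (hbx : b ∉ x) (hab : a ≠ b) {D : Finset ℕ}
    (hD : D ∈ B) (hDsub : D ⊆ x ∪ {a, b}) (haD : a ∈ D) (hbD : b ∈ D) :
    x ∪ {a, b} ∈ hatP B S := by
  set z := x ∪ {a, b} with hz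
  have hzS : z ⊆ S := Finset.union_subset hx.1 (by
    intro i hi; simp only [Finset.mem_insert, Finset.mem_singleton] at hi
    rcases hi with rfl | rfl <;> assumption)
  have hxz : x ⊆ z := Finset.subset_union_left
  refine ⟨hzS, ?_⟩
  intro K hKr hK
  by_cases haK : a ∈ K
  · have hDK : D ⊆ K := subset_comp hB hK (mem_restrict.mpr ⟨hD, hDsub⟩)
      ⟨a, Finset.mem_inter.mpr ⟨haD, haK⟩⟩
    have hbK : b ∈ K := hDK hbD
    have hKz : K ⊆ z := (mem_restrict.mp hK.1).2
    have hKeq : K = (x ∩ K) ∪ {a, b} := by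
      apply Finset.Subset.antisymm
      · intro i hi
        have := hKz hi
        rw [hz, Finset.mem_union] at this
        rcases this with h' | h'
        · exact Finset.mem_union_left _ (Finset.mem_inter.mpr ⟨h', hi⟩)
        · exact Finset.mem_union_right _ h'
      · apply Finset.union_subset Finset.inter_subset_right
        intro i hi
        simp only [Finset.mem_insert, Finset.mem_singleton] at hi
        rcases hi with rfl | rfl <;> assumption
    have hdisj : Disjoint (x ∩ K) ({a, b} : Finset ℕ) := by
      rw [Finset.disjoint_right]
      intro i hi
      simp only [Finset.mem_insert, Finset.mem_singleton] at hi
      rcases hi with rfl | rfl <;> simp [hax, hbx]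
    have hcard : K.card = (x ∩ K).card + 2 := by
      conv_lhs => rw [hKeq]
      rw [Finset.card_union_of_disjoint hdisj, Finset.card_pair hab]
    rw [hcard]
    obtain ⟨p, hp⟩ := even_inter_comp hB hx hxz hzS hK
    exact ⟨p + 1, by omega⟩
  · have hbK : b ∉ K := by
      intro hbK
      exact haK (subset_comp hB hK (mem_restrict.mpr ⟨hD, hDsub⟩)
        ⟨b, Finset.mem_inter.mpr ⟨hbD, hbK⟩⟩ haD)
    have hKx : K ⊆ x := by
      intro i hi
      have := (mem_restrict.mp hK.1).2 hi
      rw [hz, Finset.mem_union] at this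
      rcases this with h' | h'
      · exact h'
      · simp only [Finset.mem_insert, Finset.mem_singleton] at h'
        rcases h' with rfl | rfl
        · exact absurd hi haK
        · exact absurd hi hbK
    have hKcomp : IsComponent (restrict B x) K := by
      refine ⟨mem_restrict.mpr ⟨(mem_restrict.mp hK.1).1, hKx⟩, fun J hJ hKJ => ?_⟩
      exact hK.2 J (restrict_mono hxz hJ) hKJ
    exact hx.2 K hKcomp.1 hKcomp

lemma pair_conn {S : Finset ℕ} {B : Finset (Finset ℕ)} (hB : IsBuilding S B)
    {x : Finset ℕ} (hx : x ∈ hatP B S) {a b : ℕ}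
    (hax : a ∉ x) (hbx : b ∉ x) (hab : a ≠ b)
    (hz' : x ∪ {a, b} ∈ hatP B S) :
    ∃ K, IsComponent (restrict B (x ∪ {a, b})) K ∧ a ∈ K ∧ b ∈ K := by
  set z := x ∪ {a, b} with hz
  have hxz : x ⊆ z := Finset.subset_union_left
  have haz : a ∈ z := by simp [hz]
  obtain ⟨K, hK, haK⟩ := mem_exists_comp hB hz'.1 haz
  refine ⟨K, hK, haK, ?_⟩
  by_contra hbK
  have hKeq : K = (x ∩ K) ∪ {a} := by
    apply Finset.Subset.antisymm
    · intro i hi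
      have := (mem_restrict.mp hK.1).2 hi
      rw [hz, Finset.mem_union] at this
      rcases this with h' | h'
      · exact Finset.mem_union_left _ (Finset.mem_inter.mpr ⟨h', hi⟩)
      · simp only [Finset.mem_insert, Finset.mem_singleton] at h'
        rcases h' with rfl | rfl
        · exact Finset.mem_union_right _ (Finset.mem_singleton_self _)
        · exact absurd hi hbK
    · apply Finset.union_subset Finset.inter_subset_right
      simpa using haK
  have hdisj : Disjoint (x ∩ K) ({a} : Finset ℕ) := by
    rw [Finset.disjoint_right]
    intro i hi
    rw [Finset.mem_singleton] at hi; subst hi; simp [hax]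
  have hcard : K.card = (x ∩ K).card + 1 := by
    conv_lhs => rw [hKeq]
    rw [Finset.card_union_of_disjoint hdisj, Finset.card_singleton]
  have hev : Even K.card := hz'.2 K hK.1 hK
  obtain ⟨p, hp⟩ := even_inter_comp hB hx hxz hz'.1 hK
  obtain ⟨q, hq⟩ := hev
  omega

lemma sdiff_pair {x : Finset ℕ} {a b : ℕ} (hax : a ∉ x) (hbx : b ∉ x) :
    (x ∪ {a, b}) \ x = {a, b} := by
  ext i
  simp only [Finset.mem_sdiff, Finset.mem_union, Finset.mem_insert, Finset.mem_singleton]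
  constructor
  · rintro ⟨h1 | h1, h2⟩
    · exact absurd h1 h2
    · exact h1
  · rintro (rfl | rfl)
    · exact ⟨Or.inr (Or.inl rfl), hax⟩
    · exact ⟨Or.inr (Or.inr rfl), hbx⟩

lemma mu_pair {S : Finset ℕ} {B : Finset (Finset ℕ)} (hB : IsBuilding S B)
    {x K : Finset ℕ} {a b : ℕ} (hax : a ∉ x) (hbx : b ∉ x) (hab : b < a)
    (hK : IsComponent (restrict B (x ∪ {a, b})) K) (haK : a ∈ K) (hbK : b ∈ K) :
    mu B x (x ∪ {a, b}) = (fmax K, (a : ℤ), (b : ℤ)) := by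
  have hsd : (x ∪ {a, b}) \ x = {a, b} := sdiff_pair hax hbx
  have hcv : comp B x (x ∪ {a, b}) = K := by
    apply comp_val hB (by rw [hsd]; exact ⟨a, by simp⟩) hK
    rw [hsd]
    intro i hi
    simp only [Finset.mem_insert, Finset.mem_singleton] at hi
    rcases hi with rfl | rfl <;> assumption
  rw [mu, hcv, hsd, fmax_pair hab, fmin_pair hab]

lemma covers_of_pair {S : Finset ℕ} {B : Finset (Finset ℕ)} (hB : IsBuilding S B)
    {x z : Finset ℕ} (hx : x ∈ hatP B S) (hz : z ∈ hatP B S)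
    (hss : x ⊂ z) (hcard : (z \ x).card = 2) : Covers B S x z := by
  refine ⟨hx, hz, hss, ?_⟩
  intro J hJ hxJ hJz
  have h1 : x.card < J.card := Finset.card_lt_card hxJ
  have h2 : J.card < z.card := Finset.card_lt_card hJz
  have h3 : (z \ x).card + x.card = z.card := Finset.card_sdiff_add_card_eq_card hss.1
  obtain ⟨p, hp⟩ := even_card_of_hatP hB hx
  obtain ⟨q, hq⟩ := even_card_of_hatP hB hJ
  omega

end BS
namespace BS

/-- The greedy cover data: `C` is the component of `restrict B y` meeting `y \ x`
with the largest maximum, and `a > b` are the two largest elements of `C \ x`;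
`z = x ∪ {a,b}` and `L` is the resulting label. -/
def GoodStep (B : Finset (Finset ℕ)) (x y z : Finset ℕ) (L : ℤ × ℤ × ℤ) : Prop :=
  ∃ C a b, IsComponent (restrict B y) C ∧ (C \ x).Nonempty ∧
    (∀ C', IsComponent (restrict B y) C' → (C' \ x).Nonempty → fmax C' ≤ fmax C) ∧
    a ∈ C \ x ∧ (∀ i ∈ C \ x, i ≤ a) ∧
    b ∈ C \ x ∧ b ≠ a ∧ (∀ i ∈ C \ x, i ≠ a → i ≤ b) ∧
    z = x ∪ {a, b} ∧ L = (fmax C, (a : ℤ), (b : ℤ))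

/-- components meeting `y \ x` have even, hence ≥ 2, intersection with `y \ x`. -/
lemma comp_sdiff_even {S : Finset ℕ} {B : Finset (Finset ℕ)} (hB : IsBuilding S B)
    {x y C : Finset ℕ} (hx : x ∈ hatP B S) (hy : y ∈ hatP B S) (hxy : x ⊆ y)
    (hC : IsComponent (restrict B y) C) : Even (C \ x).card := by
  have h1 : (C \ x).card + (C ∩ x).card = C.card := Finset.card_sdiff_add_card_inter C x
  have h2 : Even C.card := hy.2 C hC.1 hC
  have h3 : Even (x ∩ C).card := even_inter_comp hB hx hxy hy.1 hC
  rw [Finset.inter_comm] at h3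
  obtain ⟨p, hp⟩ := h2; obtain ⟨q, hq⟩ := h3
  exact ⟨C.card / 2 - q, by omega⟩

lemma exists_goodStep {S : Finset ℕ} {B : Finset (Finset ℕ)} (hB : IsBuilding S B)
    {x y : Finset ℕ} (hx : x ∈ hatP B S) (hy : y ∈ hatP B S) (hxy : x ⊂ y) :
    ∃ z L, GoodStep B x y z L := by
  classical
  obtain ⟨w, hw⟩ := Finset.exists_of_ssubset hxy
  obtain ⟨C₀, hC₀, hwC₀⟩ := mem_exists_comp hB hy.1 hw.1
  have hne : ((comps B y).filter (fun C => (C \ x).Nonempty)).Nonempty :=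
    ⟨C₀, Finset.mem_filter.mpr ⟨mem_comps.mpr hC₀, ⟨w, Finset.mem_sdiff.mpr ⟨hwC₀, hw.2⟩⟩⟩⟩
  obtain ⟨C, hC, hCmax⟩ := Finset.exists_max_image _ fmax hne
  rw [Finset.mem_filter, mem_comps] at hC
  have hCne : (C \ x).Nonempty := hC.2
  have hcard2 : 2 ≤ (C \ x).card := by
    obtain ⟨p, hp⟩ := comp_sdiff_even hB hx hy hxy.1 hC.1
    have := Finset.card_pos.mpr hCne
    omega
  obtain ⟨a, haC, hafm, hamax⟩ := fmax_spec hCne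
  have herase : ((C \ x).erase a).Nonempty := by
    rw [← Finset.card_pos, Finset.card_erase_of_mem haC]
    omega
  obtain ⟨b, hbC, hbfm, hbmax⟩ := fmax_spec herase
  rw [Finset.mem_erase] at hbC
  refine ⟨x ∪ {a, b}, (fmax C, (a : ℤ), (b : ℤ)), C, a, b, hC.1, hCne, ?_, haC, hamax,
    hbC.2, hbC.1, ?_, rfl, rfl⟩
  · intro C' hC' hne'
    exact hCmax C' (Finset.mem_filter.mpr ⟨mem_comps.mpr hC', hne'⟩)
  · intro i hi hia
    exact hbmax i (Finset.mem_erase.mpr ⟨hia, hi⟩)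

lemma goodStep_spec {S : Finset ℕ} {B : Finset (Finset ℕ)} (hB : IsBuilding S B)
    (hc : IsChordal B) {x y z : Finset ℕ} {L : ℤ × ℤ × ℤ}
    (hx : x ∈ hatP B S) (hy : y ∈ hatP B S) (hxy : x ⊆ y)
    (hg : GoodStep B x y z L) :
    Covers B S x z ∧ z ⊆ y ∧ mu B x z = L ∧ (z \ x).card = 2 := by
  obtain ⟨C, a, b, hC, hCne, hCmax, haC, hamax, hbC, hba, hbmax, hzeq, hLeq⟩ := hg
  rw [Finset.mem_sdiff] at haC hbC
  have hCy : C ⊆ y := (comp_mem hC).2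
  have hblta : b < a := lt_of_le_of_ne (hamax b (Finset.mem_sdiff.mpr hbC)) hba
  -- the connecting suffix set
  set D := C.filter (fun c => b ≤ c) with hD
  have hDB : D ∈ B := hc C (comp_mem hC).1 b hbC.1
  have haD : a ∈ D := Finset.mem_filter.mpr ⟨haC.1, le_of_lt hblta⟩
  have hbD : b ∈ D := Finset.mem_filter.mpr ⟨hbC.1, le_refl b⟩
  have hDsub : D ⊆ x ∪ {a, b} := by
    intro i hi
    rw [hD, Finset.mem_filter] at hi
    by_cases hix : i ∈ x
    · exact Finset.mem_union_left _ hix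
    · have hiC : i ∈ C \ x := Finset.mem_sdiff.mpr ⟨hi.1, hix⟩
      by_cases hia : i = a
      · subst hia; simp
      · have : i ≤ b := hbmax i hiC hia
        have : i = b := le_antisymm this hi.2
        subst this; simp
  have hzhat : z ∈ hatP B S := by
    rw [hzeq]
    exact hatP_insert_pair hB hx (hy.1 (hCy haC.1)) (hy.1 (hCy hbC.1))
      haC.2 hbC.2 (Ne.symm hba) hDB hDsub haD hbD
  have hzy : z ⊆ y := by
    rw [hzeq]
    refine Finset.union_subset hxy ?_
    intro i hi
    simp only [Finset.mem_insert, Finset.mem_singleton] at hi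
    rcases hi with rfl | rfl
    · exact hCy haC.1
    · exact hCy hbC.1
  have hsd : z \ x = {a, b} := by rw [hzeq]; exact sdiff_pair haC.2 hbC.2
  have hcard : (z \ x).card = 2 := by rw [hsd]; exact Finset.card_pair (Ne.symm hba)
  have hss : x ⊂ z := by
    rw [Finset.ssubset_iff_of_subset (hzeq ▸ Finset.subset_union_left)]
    exact ⟨a, by simp [hzeq], haC.2⟩
  obtain ⟨K, hK, haK, hbK⟩ := pair_conn hB hx haC.2 hbC.2 (Ne.symm hba) (hzeq ▸ hzhat)
  have hKC : K ⊆ C := by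
    refine subset_comp hB hC ?_ ⟨a, Finset.mem_inter.mpr ⟨haK, haC.1⟩⟩
    rw [mem_restrict]
    exact ⟨(comp_mem hK).1, (comp_mem hK).2.trans (hzeq ▸ hzy)⟩
  have hDK : D ⊆ K := subset_comp hB hK (mem_restrict.mpr ⟨hDB, hDsub⟩)
    ⟨a, Finset.mem_inter.mpr ⟨haD, haK⟩⟩
  have hfm : fmax K = fmax C := by
    obtain ⟨m, hmC, hmfm, hmmax⟩ := fmax_spec ⟨a, haC.1⟩
    have hmD : m ∈ D := Finset.mem_filter.mpr ⟨hmC, hmmax b hbC.1⟩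
    have h1 : fmax C ≤ fmax K := by rw [hmfm]; exact le_fmax (hDK hmD)
    exact le_antisymm (fmax_mono hKC) h1
  have hmu : mu B x z = L := by
    rw [hzeq, mu_pair hB haC.2 hbC.2 hblta hK haK hbK, hfm, hLeq]
  exact ⟨covers_of_pair hB hx hzhat hss hcard, hzy, hmu, hcard⟩

lemma cover_card {S : Finset ℕ} {B : Finset (Finset ℕ)} (hB : IsBuilding S B)
    (hc : IsChordal B) {x w : Finset ℕ} (hcov : Covers B S x w) : (w \ x).card = 2 := by
  obtain ⟨hx, hw, hss, hmax⟩ := hcov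
  obtain ⟨z, L, hg⟩ := exists_goodStep hB hx hw hss
  obtain ⟨hcovz, hzw, _, hcard⟩ := goodStep_spec hB hc hx hw hss.1 hg
  have hzeq : z = w := by
    by_contra hne
    exact hmax z hcovz.2.1 hcovz.2.2.1 (Finset.ssubset_iff_subset_ne.mpr ⟨hzw, hne⟩)
  rw [← hzeq]; exact hcard

lemma cover_mu {S : Finset ℕ} {B : Finset (Finset ℕ)} (hB : IsBuilding S B)
    (hc : IsChordal B) {x w : Finset ℕ} (hcov : Covers B S x w) :
    ∃ K a b, b < a ∧ a ∉ x ∧ b ∉ x ∧ w = x ∪ {a, b} ∧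
      IsComponent (restrict B w) K ∧ a ∈ K ∧ b ∈ K ∧
      mu B x w = (fmax K, (a : ℤ), (b : ℤ)) := by
  obtain ⟨a, b, hab, hsd⟩ := Finset.card_eq_two.mp (cover_card hB hc hcov)
  obtain ⟨hx, hw, hss, -⟩ := hcov
  -- wlog b < a
  have main : ∀ a b : ℕ, b < a → w \ x = {a, b} →
      ∃ K a b, b < a ∧ a ∉ x ∧ b ∉ x ∧ w = x ∪ {a, b} ∧
        IsComponent (restrict B w) K ∧ a ∈ K ∧ b ∈ K ∧
        mu B x w = (fmax K, (a : ℤ), (b : ℤ)) := by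
    intro a b hlt hsd
    have hax : a ∉ x := (Finset.mem_sdiff.mp (hsd ▸ Finset.mem_insert_self a {b})).2
    have hbx : b ∉ x := (Finset.mem_sdiff.mp (hsd ▸ (by simp : b ∈ ({a, b} : Finset ℕ)))).2
    have hweq : w = x ∪ {a, b} := by
      rw [← hsd, Finset.union_sdiff_of_subset hss.1]
    obtain ⟨K, hK, haK, hbK⟩ := pair_conn hB hx hax hbx (ne_of_gt hlt)
      (hweq ▸ hw)
    exact ⟨K, a, b, hlt, hax, hbx, hweq, hweq ▸ hK, haK, hbK,
      by rw [hweq]; exact mu_pair hB hax hbx hlt hK haK hbK⟩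
  rcases lt_or_gt_of_ne hab with h | h
  · exact main b a h (by rw [hsd]; exact Finset.pair_comm a b)
  · exact main a b h hsd

end BS
namespace BS

lemma comp_nonempty {S : Finset ℕ} {B : Finset (Finset ℕ)} (hB : IsBuilding S B)
    {I C : Finset ℕ} (hC : IsComponent (restrict B I) C) : C.Nonempty :=
  (hB.1 C (comp_mem hC).1).2

lemma comp_eq_of_fmax {S : Finset ℕ} {B : Finset (Finset ℕ)} (hB : IsBuilding S B)
    {I C C' : Finset ℕ} (hC : IsComponent (restrict B I) C)
    (hC' : IsComponent (restrict B I) C') (h : fmax C = fmax C') : C = C' := by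
  obtain ⟨m, hm, hfm, -⟩ := fmax_spec (comp_nonempty hB hC)
  obtain ⟨m', hm', hfm', -⟩ := fmax_spec (comp_nonempty hB hC')
  have : m = m' := by
    have := hfm ▸ hfm' ▸ h
    exact_mod_cast this
  subst this
  exact comp_eq_of_meet hB hC hC' ⟨m, Finset.mem_inter.mpr ⟨hm, hm'⟩⟩

lemma labGt_of_fst_lt {p q : ℤ × ℤ × ℤ} (h : q.1 < p.1) : labGt p q :=
  ⟨Or.inl h, fun he => by rw [he] at h; exact lt_irrefl _ h⟩

lemma labGt_of_snd {p q : ℤ × ℤ × ℤ} (h1 : p.1 = q.1) (h2 : omGe p.2 q.2)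
    (h3 : p.2 ≠ q.2) : labGt p q :=
  ⟨Or.inr ⟨h1, h2⟩, fun he => h3 (by rw [he])⟩

/-- G2: the greedy cover strictly dominates every other cover inside `y`. -/
lemma goodStep_dominates {S : Finset ℕ} {B : Finset (Finset ℕ)} (hB : IsBuilding S B)
    (hc : IsChordal B) {x y z w : Finset ℕ} {L : ℤ × ℤ × ℤ}
    (hx : x ∈ hatP B S) (hy : y ∈ hatP B S)
    (hg : GoodStep B x y z L) (hcov : Covers B S x w) (hwy : w ⊆ y) (hwz : w ≠ z) :
    labGt L (mu B x w) := by
  obtain ⟨C, a, b, hC, hCne, hCmax, haC, hamax, hbC, hba, hbmax, hzeq, hLeq⟩ := hg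
  obtain ⟨K, a', b', hlt', hax', hbx', hweq, hK, haK, hbK, hmu'⟩ := cover_mu hB hc hcov
  have hKy : K ∈ restrict B y :=
    mem_restrict.mpr ⟨(comp_mem hK).1, (comp_mem hK).2.trans hwy⟩
  obtain ⟨C', hC', hKC'⟩ := exists_comp hKy
  have ha'C' : a' ∈ C' \ x := Finset.mem_sdiff.mpr ⟨hKC' haK, hax'⟩
  have h1 : fmax C' ≤ fmax C := hCmax C' hC' ⟨a', ha'C'⟩
  have hKle : fmax K ≤ fmax C' := fmax_mono hKC'
  rw [hLeq, hmu']
  rcases lt_or_eq_of_le (le_trans hKle h1) with hlt | heq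
  · exact labGt_of_fst_lt hlt
  · -- fmax K = fmax C, so C' = C and a', b' ∈ C \ x
    have hC'C : C' = C := comp_eq_of_fmax hB hC' hC (le_antisymm h1 (heq ▸ hKle))
    have ha'm : a' ∈ C \ x := hC'C ▸ ha'C'
    have hb'm : b' ∈ C \ x := Finset.mem_sdiff.mpr ⟨hC'C ▸ hKC' hbK, hbx'⟩
    have hpairne : ¬(a' = a ∧ b' = b) := by
      rintro ⟨rfl, rfl⟩
      exact hwz (hweq.trans hzeq.symm)
    have ha'le : a' ≤ a := hamax a' ha'm
    by_cases ha'a : a' = a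
    · subst ha'a
      have hb'b : b' ≠ b := fun h => hpairne ⟨rfl, h⟩
      have hb'le : b' ≤ b := hbmax b' hb'm (ne_of_lt hlt')
      have hblta : b < a' := lt_of_le_of_ne (hamax b (Finset.mem_sdiff.mpr
        (Finset.mem_sdiff.mp hbC))) hba
      refine labGt_of_snd heq.symm (Or.inr ⟨rfl, ?_, ?_⟩) ?_
      · show (a' : ℤ) ≥ (b : ℤ)
        exact_mod_cast le_of_lt hblta
      · show (b : ℤ) ≥ (b' : ℤ)
        exact_mod_cast hb'le
      · intro hp
        have h2 : ((b : ℤ)) = ((b' : ℤ)) := congrArg Prod.snd hp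
        exact hb'b (Nat.cast_injective h2).symm
    · have ha'lt : a' < a := lt_of_le_of_ne ha'le ha'a
      have ha'b : a' ≤ b := hbmax a' ha'm ha'a
      have hblta : b < a := lt_of_le_of_ne (hamax b hbC) hba
      refine labGt_of_snd heq.symm (Or.inl ⟨?_, ?_, ?_⟩) ?_
      · show (a : ℤ) ≥ (b : ℤ)
        exact_mod_cast le_of_lt hblta
      · show (b : ℤ) ≥ (a' : ℤ)
        exact_mod_cast ha'b
      · show (a' : ℤ) ≥ (b' : ℤ)
        exact_mod_cast le_of_lt hlt'
      · intro hp
        have h2 : ((a : ℤ)) = ((a' : ℤ)) := congrArg Prod.fst hp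
        exact ha'a (Nat.cast_injective h2).symm

/-- G3: consecutive greedy labels decrease. -/
lemma goodStep_chain {S : Finset ℕ} {B : Finset (Finset ℕ)} (hB : IsBuilding S B)
    {x y z z₂ : Finset ℕ} {L L₂ : ℤ × ℤ × ℤ}
    (hg1 : GoodStep B x y z L) (hg2 : GoodStep B z y z₂ L₂) : labGe L L₂ := by
  obtain ⟨C, a, b, hC, hCne, hCmax, haC, hamax, hbC, hba, hbmax, hzeq, hLeq⟩ := hg1
  obtain ⟨C₂, a₂, b₂, hC₂, hC₂ne, hC₂max, haC₂, ha₂max, hbC₂, hb₂a₂, hb₂max, hz₂eq, hL₂eq⟩ := hg2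
  have hxz : x ⊆ z := hzeq ▸ Finset.subset_union_left
  have hsub : C₂ \ z ⊆ C₂ \ x := Finset.sdiff_subset_sdiff (le_refl _) hxz
  have h21 : fmax C₂ ≤ fmax C := hCmax C₂ hC₂ (hC₂ne.mono hsub)
  rw [hLeq, hL₂eq]
  by_cases hCz : (C \ z).Nonempty
  · have h12 : fmax C ≤ fmax C₂ := hC₂max C hC hCz
    have hCC₂ : C₂ = C := comp_eq_of_fmax hB hC₂ hC (le_antisymm h21 h12)
    subst hCC₂
    have ha₂m : a₂ ∈ C₂ \ x := hsub haC₂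
    have ha₂z : a₂ ∉ z := (Finset.mem_sdiff.mp haC₂).2
    have ha₂a : a₂ ≠ a := by
      intro h; subst h
      exact ha₂z (hzeq ▸ Finset.mem_union_right _ (Finset.mem_insert_self _ _))
    have ha₂b : a₂ ≤ b := hbmax a₂ ha₂m ha₂a
    have hblta : b < a := lt_of_le_of_ne (hamax b hbC) hba
    have hb₂a₂' : b₂ ≤ a₂ := ha₂max b₂ hbC₂
    refine Or.inr ⟨rfl, Or.inl ⟨?_, ?_, ?_⟩⟩
    · show (a : ℤ) ≥ (b : ℤ)
      exact_mod_cast le_of_lt hblta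
    · show (b : ℤ) ≥ (a₂ : ℤ)
      exact_mod_cast ha₂b
    · show (a₂ : ℤ) ≥ (b₂ : ℤ)
      exact_mod_cast hb₂a₂'
  · have hne : C₂ ≠ C := by
      intro h; subst h
      exact hCz hC₂ne
    have : fmax C₂ < fmax C :=
      lt_of_le_of_ne h21 (fun h => hne (comp_eq_of_fmax hB hC₂ hC h))
    exact Or.inl this

/-- G4: a non-greedy cover followed by a greedy step is not weakly decreasing. -/
lemma goodStep_not_labGe {S : Finset ℕ} {B : Finset (Finset ℕ)} (hB : IsBuilding S B)
    (hc : IsChordal B) {x y z u z₂ : Finset ℕ} {L L₂ : ℤ × ℤ × ℤ}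
    (hx : x ∈ hatP B S) (hy : y ∈ hatP B S)
    (hg : GoodStep B x y z L) (hcov : Covers B S x u) (huy : u ⊆ y) (huz : u ≠ z)
    (hg₂ : GoodStep B u y z₂ L₂) : ¬ labGe (mu B x u) L₂ := by
  obtain ⟨C, a, b, hC, hCne, hCmax, haC, hamax, hbC, hba, hbmax, hzeq, hLeq⟩ := hg
  obtain ⟨C₂, a₂, b₂, hC₂, hC₂ne, hC₂max, haC₂, ha₂max, hbC₂, hb₂a₂, hb₂max, hz₂eq, hL₂eq⟩ := hg₂
  obtain ⟨K, a', b', hlt', hax', hbx', hueq, hK, haK, hbK, hmu'⟩ := cover_mu hB hc hcov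
  have hKy : K ∈ restrict B y :=
    mem_restrict.mpr ⟨(comp_mem hK).1, (comp_mem hK).2.trans huy⟩
  obtain ⟨C', hC', hKC'⟩ := exists_comp hKy
  have ha'C' : a' ∈ C' \ x := Finset.mem_sdiff.mpr ⟨hKC' haK, hax'⟩
  have h1 : fmax C' ≤ fmax C := hCmax C' hC' ⟨a', ha'C'⟩
  have hKle : fmax K ≤ fmax C' := fmax_mono hKC'
  have hblta : b < a := lt_of_le_of_ne (hamax b hbC) hba
  rw [hmu', hL₂eq]
  by_cases hCC' : C' = C
  · -- a', b' ∈ C \ x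
    have ha'm : a' ∈ C \ x := hCC' ▸ ha'C'
    have hb'm : b' ∈ C \ x := Finset.mem_sdiff.mpr ⟨hCC' ▸ hKC' hbK, hbx'⟩
    have hpairne : ¬(({a, b} : Finset ℕ) = {a', b'}) := by
      intro h
      exact huz (by rw [hueq, hzeq, h])
    -- some element of {a,b} survives in C \ u
    have hmem_u : ∀ i, i ∈ C \ x → i ≠ a' → i ≠ b' → i ∈ C \ u := by
      intro i hi hia hib
      rw [Finset.mem_sdiff] at hi ⊢
      refine ⟨hi.1, fun hiu => ?_⟩
      rw [hueq, Finset.mem_union] at hiu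
      rcases hiu with h' | h'
      · exact hi.2 h'
      · simp only [Finset.mem_insert, Finset.mem_singleton] at h'
        rcases h' with rfl | rfl
        · exact hia rfl
        · exact hib rfl
    have hCune : (C \ u).Nonempty := by
      by_cases haa' : a = a' ∨ a = b'
      · by_cases hbb' : b = a' ∨ b = b'
        · exfalso
          apply hpairne
          apply Finset.eq_of_subset_of_card_le
          · intro i hi
            simp only [Finset.mem_insert, Finset.mem_singleton] at hi ⊢
            rcases hi with rfl | rfl
            · exact haa'
            · exact hbb'
          · rw [Finset.card_pair hba.symm, Finset.card_pair (ne_of_gt hlt')]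
        · push_neg at hbb'
          exact ⟨b, hmem_u b hbC hbb'.1 hbb'.2⟩
      · push_neg at haa'
        exact ⟨a, hmem_u a haC haa'.1 haa'.2⟩
    have h2 : fmax C ≤ fmax C₂ := hC₂max C hC hCune
    by_cases hC₂C : C₂ = C
    · subst hC₂C
      by_cases hKeq : fmax K = fmax C₂
      · -- first coordinates equal; kill omGe
        intro hge
        rcases hge with h' | ⟨h', hom⟩
        · exact absurd hKeq (ne_of_gt h')
        · -- hom : omGe (a', b') (a₂, b₂)
          by_cases ha'a : a' = a
          · subst ha'a
            have hbne : b ≠ b' := by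
              intro h
              exact hpairne (by rw [h])
            have hbCu : b ∈ C₂ \ u := hmem_u b hbC (ne_of_lt hblta) hbne
            have hba₂ : b ≤ a₂ := ha₂max b hbCu
            have hb'b : b' ≤ b := hbmax b' hb'm (ne_of_lt hlt')
            have hb'ne : b' ≠ b := fun h => hbne h.symm
            have ha₂a : a₂ ≠ a' := by
              intro h
              have := (Finset.mem_sdiff.mp haC₂).2
              rw [h, hueq] at this
              exact this (Finset.mem_union_right _ (Finset.mem_insert_self _ _))
            rcases hom with ⟨-, h2', -⟩ | ⟨h1', -, -⟩
            · dsimp only at h2'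
              have hx2 : a₂ ≤ b' := by exact_mod_cast h2'
              omega
            · dsimp only at h1'
              have : a' = a₂ := by exact_mod_cast h1'
              exact ha₂a this.symm
          · have ha'lt : a' < a := lt_of_le_of_ne (hamax a' ha'm) ha'a
            have haCu : a ∈ C₂ \ u := hmem_u a haC (fun h => ha'a h.symm) (by omega)
            have haa₂ : a ≤ a₂ := ha₂max a haCu
            rcases hom with ⟨-, h2', -⟩ | ⟨h1', -, -⟩
            · dsimp only at h2'
              have : a₂ ≤ b' := by exact_mod_cast h2'
              omega
            · dsimp only at h1'
              have : a' = a₂ := by exact_mod_cast h1'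
              omega
      · have hKlt : fmax K < fmax C₂ := lt_of_le_of_ne (le_trans hKle (hCC' ▸ h2)) hKeq
        intro hge
        rcases hge with h' | ⟨h', -⟩
        · exact absurd h' (not_lt.mpr (le_of_lt hKlt))
        · exact absurd h' (ne_of_lt hKlt)
    · have h2' : fmax C < fmax C₂ :=
        lt_of_le_of_ne h2 (fun h => hC₂C (comp_eq_of_fmax hB hC₂ hC h.symm))
      have : fmax K < fmax C₂ := lt_of_le_of_lt (le_trans hKle h1) h2'
      intro hge
      rcases hge with h' | ⟨h', -⟩
      · exact absurd h' (not_lt.mpr (le_of_lt this))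
      · exact absurd h' (ne_of_lt this)
  · -- the pair of u is in another component: C keeps all of C \ x
    have hdis : ∀ i, i ∈ C → i ∉ C' := by
      intro i hi hi'
      exact hCC' (comp_eq_of_meet hB hC' hC ⟨i, Finset.mem_inter.mpr ⟨hi', hi⟩⟩)
    have haCu : a ∈ C \ u := by
      rw [Finset.mem_sdiff]
      refine ⟨(Finset.mem_sdiff.mp haC).1, fun hau => ?_⟩
      rw [hueq, Finset.mem_union] at hau
      rcases hau with h' | h'
      · exact (Finset.mem_sdiff.mp haC).2 h'
      · simp only [Finset.mem_insert, Finset.mem_singleton] at h'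
        rcases h' with rfl | rfl
        · exact hdis a (Finset.mem_sdiff.mp haC).1 (hKC' haK)
        · exact hdis a (Finset.mem_sdiff.mp haC).1 (hKC' hbK)
    have h2 : fmax C ≤ fmax C₂ := hC₂max C hC ⟨a, haCu⟩
    have h1' : fmax C' < fmax C :=
      lt_of_le_of_ne h1 (fun h => hCC' (comp_eq_of_fmax hB hC' hC h))
    have : fmax K < fmax C₂ := lt_of_le_of_lt hKle (lt_of_lt_of_le h1' h2)
    intro hge
    rcases hge with h' | ⟨h', -⟩
    · exact absurd h' (not_lt.mpr (le_of_lt this))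
    · exact absurd h' (ne_of_lt this)

end BS
namespace BS

lemma chain_head_subset_last {S : Finset ℕ} {B : Finset (Finset ℕ)} (c : List (Finset ℕ)) :
    ∀ x l : Finset ℕ, c.Chain' (Covers B S) → c.head? = some x → c.getLast? = some l →
      x ⊆ l := by
  induction c with
  | nil => intro x l _ h1 _; simp at h1
  | cons a t ih =>
    cases t with
    | nil =>
      intro x l _ h1 h2
      simp only [List.head?_cons, Option.some.injEq] at h1
      simp only [List.getLast?_singleton, Option.some.injEq] at h2
      subst h1; subst h2; exact Finset.Subset.refl _
    | cons b t' =>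
      intro x l hch h1 h2
      simp only [List.head?_cons, Option.some.injEq] at h1
      subst h1
      simp only [List.Chain', List.isChain_cons_cons] at hch
      rw [List.getLast?_cons_cons] at h2
      exact (hch.1.2.2.1.subset).trans (ih b l hch.2 rfl h2)

lemma chain_eq_singleton {S : Finset ℕ} {B : Finset (Finset ℕ)} {c : List (Finset ℕ)}
    {x : Finset ℕ} (hch : c.Chain' (Covers B S)) (h1 : c.head? = some x)
    (h2 : c.getLast? = some x) : c = [x] := by
  cases c with
  | nil => simp at h1
  | cons a t =>
    cases t with
    | nil =>
      simp only [List.head?_cons, Option.some.injEq] at h1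
      rw [h1]
    | cons b t' =>
      exfalso
      simp only [List.head?_cons, Option.some.injEq] at h1
      subst h1
      simp only [List.Chain', List.isChain_cons_cons] at hch
      rw [List.getLast?_cons_cons] at h2
      have hbx : b ⊆ a := chain_head_subset_last _ b a hch.2 rfl h2
      exact (ssubset_irrefl a) (lt_of_lt_of_le hch.1.2.2.1 hbx)

lemma main_induction {S : Finset ℕ} {B : Finset (Finset ℕ)}
    (hB : IsBuilding S B) (hc : IsChordal B) :
    ∀ n x y, (y \ x).card = n → x ∈ hatP B S → y ∈ hatP B S → x ⊆ y →
      ∃ c : List (Finset ℕ),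
        (((IsMaxChainOn B S x y c ∧ IsDecSeq B c) ∧
          (∀ c', IsMaxChainOn B S x y c' → IsDecSeq B c' → c' = c) ∧
          (∀ c', IsMaxChainOn B S x y c' → c' ≠ c → LexSucc B c c')) ∧
          (x ≠ y → ∃ z L, GoodStep B x y z L ∧ c.getD 1 ∅ = z ∧ 2 ≤ c.length)) := by
  intro n
  induction n using Nat.strong_induction_on with
  | _ n IH =>
    intro x y hcard hx hy hxy
    by_cases hxy' : x = y
    · subst hxy'
      refine ⟨[x], ⟨⟨⟨List.isChain_singleton x, rfl, rfl⟩, ?_⟩, ?_, ?_⟩, fun h => absurd rfl h⟩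
      · intro i hi; simp at hi
      · intro c' h1 h2
        exact chain_eq_singleton h1.1 h1.2.1 h1.2.2
      · intro c' h1 hne
        exact absurd (chain_eq_singleton h1.1 h1.2.1 h1.2.2) hne
    · have hss : x ⊂ y := Finset.ssubset_iff_subset_ne.mpr ⟨hxy, hxy'⟩
      obtain ⟨z, L, hg⟩ := exists_goodStep hB hx hy hss
      obtain ⟨hcov, hzy, hmuz, hcard2⟩ := goodStep_spec hB hc hx hy hxy hg
      have hz : z ∈ hatP B S := hcov.2.1
      have hxz : x ⊂ z := hcov.2.2.1
      have hsd_lt : ∀ u : Finset ℕ, x ⊂ u → u ⊆ y → (y \ u).card < n := by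
        intro u hu huy
        have hsub : y \ u ⊂ y \ x := by
          rw [Finset.ssubset_iff_subset_ne]
          refine ⟨Finset.sdiff_subset_sdiff (le_refl y) hu.1, ?_⟩
          obtain ⟨a, ha⟩ := Finset.exists_of_ssubset hu
          intro h
          have ha1 : a ∈ y \ x := Finset.mem_sdiff.mpr ⟨huy ha.1, ha.2⟩
          rw [← h, Finset.mem_sdiff] at ha1
          exact ha1.2 ha.1
        calc (y \ u).card < (y \ x).card := Finset.card_lt_card hsub
          _ = n := hcard
      obtain ⟨d, ⟨⟨hdMC, hdDec⟩, hdUniq, hdLex⟩, hdG⟩ :=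
        IH _ (hsd_lt z hxz hzy) z y rfl hz hy hzy
      obtain ⟨t0, hd_eq⟩ : ∃ t0, d = z :: t0 := by
        cases d with
        | nil => simp [IsMaxChainOn] at hdMC
        | cons a t =>
          have := hdMC.2.1
          simp only [List.head?_cons, Option.some.injEq] at this
          exact ⟨t, by rw [this]⟩
      have hd0 : d.getD 0 ∅ = z := by rw [hd_eq]; rfl
      have hdlen : 1 ≤ d.length := by rw [hd_eq]; simp
      have hMCc : IsMaxChainOn B S x y (x :: d) := by
        refine ⟨?_, rfl, ?_⟩
        · simp only [List.Chain', List.isChain_cons]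
          refine ⟨?_, hdMC.1⟩
          intro b hb
          rw [hd_eq] at hb
          simp only [List.head?_cons, Option.mem_def, Option.some.injEq] at hb
          rw [← hb]; exact hcov
        · rw [hd_eq, List.getLast?_cons_cons, ← hd_eq]
          exact hdMC.2.2
      have hzney : 2 ≤ d.length → z ≠ y := by
        intro hlen he
        have := chain_eq_singleton hdMC.1 hdMC.2.1 (he ▸ hdMC.2.2)
        rw [this] at hlen; simp at hlen
      have hDecc : IsDecSeq B (x :: d) := by
        intro i hi
        match i with
        | 0 =>
          simp only [List.getD_cons_zero, List.getD_cons_succ]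
          rw [hd0]
          have hlen2 : 2 ≤ d.length := by
            simp only [List.length_cons] at hi; omega
          obtain ⟨z₂, L₂, hg₂, hd1, -⟩ := hdG (hzney hlen2)
          rw [hd1, hmuz]
          have hmu₂ := (goodStep_spec hB hc hz hy hzy hg₂).2.2.1
          rw [hmu₂]
          exact goodStep_chain hB hg hg₂
        | i + 1 =>
          simp only [List.getD_cons_succ]
          apply hdDec
          simp only [List.length_cons] at hi; omega
      refine ⟨x :: d, ⟨⟨hMCc, hDecc⟩, ?_, ?_⟩,
        fun _ => ⟨z, L, hg, by rw [List.getD_cons_succ]; exact hd0, by simp only [List.length_cons]; omega⟩⟩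
      · -- uniqueness
        intro c' hMC' hDec'
        obtain ⟨t, rfl⟩ : ∃ t, c' = x :: t := by
          cases c' with
          | nil => simp [IsMaxChainOn] at hMC'
          | cons a t =>
            have := hMC'.2.1
            simp only [List.head?_cons, Option.some.injEq] at this
            exact ⟨t, by rw [this]⟩
        obtain ⟨u, t', rfl⟩ : ∃ u t', t = u :: t' := by
          cases t with
          | nil =>
            have := hMC'.2.2
            simp only [List.getLast?_singleton, Option.some.injEq] at this
            exact absurd this hxy'
          | cons u t' => exact ⟨u, t', rfl⟩
        have hch := hMC'.1
        simp only [List.Chain', List.isChain_cons_cons] at hch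
        have hcovu : Covers B S x u := hch.1
        have htMC : IsMaxChainOn B S u y (u :: t') := by
          refine ⟨hch.2, rfl, ?_⟩
          have := hMC'.2.2
          rwa [List.getLast?_cons_cons] at this
        have htDec : IsDecSeq B (u :: t') := by
          intro i hi
          have := hDec' (i + 1) (by simp only [List.length_cons] at hi ⊢; omega)
          simpa only [List.getD_cons_succ] using this
        have huy : u ⊆ y := chain_head_subset_last _ u y htMC.1 rfl htMC.2.2
        have hu : u ∈ hatP B S := hcovu.2.1
        by_cases huz : u = z
        · subst huz
          have : u :: t' = d := hdUniq _ htMC htDec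
          rw [this]
        · exfalso
          have hune : u ≠ y := by
            intro h
            subst h
            have h1 : (u \ x).card = 2 := cover_card hB hc hcovu
            have h2 : z.card = x.card + 2 := by
              have := Finset.card_sdiff_add_card_eq_card hxz.1
              omega
            have h3 : u.card = x.card + 2 := by
              have := Finset.card_sdiff_add_card_eq_card hcovu.2.2.1.1
              omega
            exact huz ((Finset.eq_of_subset_of_card_le hzy (by omega)).symm)
          obtain ⟨du, ⟨⟨huMC, huDec⟩, huUniq, huLex⟩, huG⟩ :=
            IH _ (hsd_lt u hcovu.2.2.1 huy) u y rfl hu hy huy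
          have hteq : u :: t' = du := huUniq _ htMC htDec
          obtain ⟨z₂, L₂, hg₂, hdu1, hlen2⟩ := huG hune
          have ht'len : 1 ≤ t'.length := by
            have : du.length = t'.length + 1 := by rw [← hteq]; simp
            omega
          have h0 := hDec' 0 (by simp only [List.length_cons]; omega)
          simp only [List.getD_cons_zero, List.getD_cons_succ] at h0
          have hgd : t'.getD 0 ∅ = z₂ := by
            have : (u :: t').getD 1 ∅ = z₂ := by rw [hteq]; exact hdu1
            simpa only [List.getD_cons_succ] using this
          rw [hgd] at h0
          have hmu₂ := (goodStep_spec hB hc hu hy huy hg₂).2.2.1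
          rw [hmu₂] at h0
          exact goodStep_not_labGe hB hc hx hy hg hcovu huy huz hg₂ h0
      · -- lex succession
        intro c' hMC' hnec
        obtain ⟨t, rfl⟩ : ∃ t, c' = x :: t := by
          cases c' with
          | nil => simp [IsMaxChainOn] at hMC'
          | cons a t =>
            have := hMC'.2.1
            simp only [List.head?_cons, Option.some.injEq] at this
            exact ⟨t, by rw [this]⟩
        obtain ⟨u, t', rfl⟩ : ∃ u t', t = u :: t' := by
          cases t with
          | nil =>
            have := hMC'.2.2
            simp only [List.getLast?_singleton, Option.some.injEq] at this
            exact absurd this hxy'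
          | cons u t' => exact ⟨u, t', rfl⟩
        have hch := hMC'.1
        simp only [List.Chain', List.isChain_cons_cons] at hch
        have hcovu : Covers B S x u := hch.1
        have htMC : IsMaxChainOn B S u y (u :: t') := by
          refine ⟨hch.2, rfl, ?_⟩
          have := hMC'.2.2
          rwa [List.getLast?_cons_cons] at this
        have huy : u ⊆ y := chain_head_subset_last _ u y htMC.1 rfl htMC.2.2
        by_cases huz : u = z
        · subst huz
          have htd : u :: t' ≠ d := by
            intro h
            exact hnec (by rw [h])
          obtain ⟨i, hi, hpre, hgt⟩ := hdLex _ htMC htd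
          refine ⟨i + 1, ?_, ?_, ?_⟩
          · simp only [List.length_cons]; omega
          · intro j hj
            match j with
            | 0 =>
              simp only [List.getD_cons_zero, List.getD_cons_succ]
              rw [hd0]
            | j + 1 =>
              simp only [List.getD_cons_succ]
              exact hpre j (by omega)
          · simp only [List.getD_cons_succ]
            exact hgt
        · refine ⟨0, ?_, ?_, ?_⟩
          · simp only [List.length_cons]; omega
          · intro j hj; omega
          · simp only [List.getD_cons_zero, List.getD_cons_succ]
            rw [hd0, hmuz]
            exact goodStep_dominates hB hc hx hy hg hcovu huy huz

end BS

/-- For a chordal building set `B`, the edge labeling `μ_B` of `P̂_B` is reversed edge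
lexicographical: each interval `[x,y]` of `P̂_B` has a unique maximal chain with
decreasing label sequence, and this chain lexicographically succeeds every other
maximal chain of the interval. Hence `P̂_B` is EL-shellable. -/
theorem hatP_EL_shellable (S : Finset ℕ) (B : Finset (Finset ℕ))
    (hB : BS.IsBuilding S B) (hc : BS.IsChordal B) :
    ∀ x y : Finset ℕ, x ∈ BS.hatP B S → y ∈ BS.hatP B S → x ⊆ y →
      ∃ c : List (Finset ℕ),
        (BS.IsMaxChainOn B S x y c ∧ BS.IsDecSeq B c) ∧
        (∀ c', BS.IsMaxChainOn B S x y c' → BS.IsDecSeq B c' → c' = c) ∧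
        (∀ c', BS.IsMaxChainOn B S x y c' → c' ≠ c → BS.LexSucc B c c') := by
  
  intro x y hx hy hxy
  obtain ⟨c, ⟨h1, h2, h3⟩, -⟩ :=
    BS.main_induction hB hc ((y \ x).card) x y rfl hx hy hxy
  exact ⟨c, h1, h2, h3⟩
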